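/- arXiv:1105.3641 — 2 statements merged into one kernel-verified Lean document; each statement's English description precedes it below -/
import Mathlib

section
/- Let S_λ be a weighted shift on a directed tree T with weights λ = {λ_v}_{v∈V°} such that the linear span of {e_u : u ∈ V} is contained in D^∞(S_λ), and let u ∈ V have at least one child. Suppose for every v ∈ Chi(u) the sequence {‖S_λ^n e_v‖²}_{n=0}^∞ is a Stieltjes moment sequence with a representing measure μ_v. If S_λ satisfies the consistency condition at u, i.e. ∑_{v∈Chi(u)} |λ_v|² ∫_{[0,∞)} (1/s) dμ_v(s) ≤ 1, then {‖S_λ^n e_u‖²}_{n=0}^∞ is a Stieltjes moment sequence and the positive Borel measure μ_u on [0,∞) defined by μ_u(σ) = ∑_{v∈Chi(u)} |λ_v|² ∫_σ (1/s) dμ_v(s) + ε_u δ₀(σ), with ε_u = 1 − ∑_{v∈Chi(u)} |λ_v|² ∫_{[0,∞)} (1/s) dμ_v(s), is a representing measure of {‖S_λ^n e_u‖²}_{n=0}^∞. -/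
open MeasureTheory ENNReal
open scoped NNReal
noncomputable section

/-- `μ` is a representing measure of the sequence `t`. -/
def IsRepMeasure (μ : Measure ℝ≥0) (t : ℕ → ℝ) : Prop :=
  ∀ n : ℕ, Integrable (fun s : ℝ≥0 => (s : ℝ) ^ n) μ ∧ t n = ∫ s, (s : ℝ) ^ n ∂μ

/-- `t` is a Stieltjes moment sequence. -/
def IsStieltjesMoment (t : ℕ → ℝ) : Prop := ∃ μ : Measure ℝ≥0, IsRepMeasure μ t

/-- `t` is a determinate Stieltjes moment sequence. -/
def IsDetStieltjesMoment (t : ℕ → ℝ) : Prop := ∃! μ : Measure ℝ≥0, IsRepMeasure μ t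

section Operators

universe u
variable {H : Type u} [NormedAddCommGroup H] [InnerProductSpace ℂ H]

/-- The maximal domain of the composition `S ∘ T`. -/
def compDomain (S T : H →ₗ.[ℂ] H) : Submodule ℂ H where
  carrier := {x | ∃ hx : x ∈ T.domain, T ⟨x, hx⟩ ∈ S.domain}
  zero_mem' := ⟨T.domain.zero_mem, by
    have h0 : (⟨0, T.domain.zero_mem⟩ : T.domain) = 0 := rfl
    rw [h0, LinearPMap.map_zero]; exact S.domain.zero_mem⟩
  add_mem' := by
    rintro x y ⟨hx, hx'⟩ ⟨hy, hy'⟩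
    refine ⟨T.domain.add_mem hx hy, ?_⟩
    have : (⟨x + y, T.domain.add_mem hx hy⟩ : T.domain) = ⟨x, hx⟩ + ⟨y, hy⟩ := rfl
    rw [this, LinearPMap.map_add]
    exact S.domain.add_mem hx' hy'
  smul_mem' := by
    rintro c x ⟨hx, hx'⟩
    refine ⟨T.domain.smul_mem c hx, ?_⟩
    have : (⟨c • x, T.domain.smul_mem c hx⟩ : T.domain) = c • (⟨x, hx⟩ : T.domain) := rfl
    rw [this, LinearPMap.map_smul]
    exact S.domain.smul_mem c hx'

/-- Composition `S ∘ T` of partial operators, on the maximal domain. -/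
def pmapComp (S T : H →ₗ.[ℂ] H) : H →ₗ.[ℂ] H :=
  S.comp (T.domRestrict (compDomain S T)) (by
    rintro ⟨x, hx⟩
    have hxT : x ∈ T.domain := (Submodule.mem_inf.mp hx).2
    have hxD : x ∈ compDomain S T := (Submodule.mem_inf.mp hx).1
    first
    | exact hxD.choose_spec
    | (erw [LinearPMap.domRestrict_apply (show ((⟨x, hx⟩ : ↥(compDomain S T ⊓ T.domain)) : H)
      = ((⟨x, hxT⟩ : T.domain) : H) from rfl)]
       exact hxD.choose_spec))

/-- Powers of a partial operator: `pmapPow S n = Sⁿ` with its natural domain. -/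
def pmapPow (S : H →ₗ.[ℂ] H) : ℕ → (H →ₗ.[ℂ] H)
  | 0 => LinearMap.id.toPMap ⊤
  | n + 1 => pmapComp (pmapPow S n) S

open Classical in
/-- Total (junk-valued) application of the power `Sⁿ`. -/
def powApp (S : H →ₗ.[ℂ] H) (n : ℕ) (x : H) : H :=
  if h : x ∈ (pmapPow S n).domain then (pmapPow S n) ⟨x, h⟩ else 0

/-- The set of `C^∞`-vectors of `S`. -/
def Dinf (S : H →ₗ.[ℂ] H) : Set H := {x | ∀ n : ℕ, x ∈ (pmapPow S n).domain}

/-- `F` is a core of `S`. -/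
def IsCore (S : H →ₗ.[ℂ] H) (F : Submodule ℂ H) : Prop :=
  F ≤ S.domain ∧ (S.graph : Set (H × H)) ⊆ closure ((S.domRestrict F).graph : Set (H × H))

end Operators
section Operators
universe u
variable {H : Type u} [NormedAddCommGroup H] [InnerProductSpace ℂ H]

/-- A normal (unbounded) operator: closed, densely defined, with `D(N*) = D(N)` and
`‖N* x‖ = ‖N x‖` on the common domain. -/
def IsNormalOp [CompleteSpace H] (N : H →ₗ.[ℂ] H) : Prop :=
  Dense (N.domain : Set H) ∧ N.IsClosed ∧ N.adjoint.domain = N.domain ∧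
    ∀ (x : H) (hx : x ∈ N.domain) (hx' : x ∈ N.adjoint.domain),
      ‖N.adjoint ⟨x, hx'⟩‖ = ‖N ⟨x, hx⟩‖

/-- A subnormal operator: densely defined with a normal extension in a possibly
larger Hilbert space. -/
def IsSubnormal {H : Type u} [NormedAddCommGroup H] [InnerProductSpace ℂ H]
    (S : H →ₗ.[ℂ] H) : Prop :=
  Dense (S.domain : Set H) ∧
  ∃ (K : Type u) (_ : NormedAddCommGroup K) (_ : InnerProductSpace ℂ K) (_ : CompleteSpace K)
    (J : H →ₗᵢ[ℂ] K) (N : K →ₗ.[ℂ] K), IsNormalOp N ∧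
      ∀ x : S.domain, ∃ hx : J x ∈ N.domain, N ⟨J x, hx⟩ = J (S x)

/-- A hyponormal operator. -/
def IsHyponormal [CompleteSpace H] (S : H →ₗ.[ℂ] H) : Prop :=
  Dense (S.domain : Set H) ∧
  ∀ (x : H) (hx : x ∈ S.domain), ∃ hx' : x ∈ S.adjoint.domain,
      ‖S.adjoint ⟨x, hx'⟩‖ ≤ ‖S ⟨x, hx⟩‖

end Operators

/-- A directed tree on the vertex set `V`: a connected directed graph without circuits
in which every non-root vertex has a unique parent. -/
structure DirectedTree (V : Type*) where
  edge : V → V → Prop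
  connected : ∀ u v : V, Relation.ReflTransGen (fun a b => edge a b ∨ edge b a) u v
  no_circuits : ∀ v : V, ¬ Relation.TransGen edge v v
  parent_unique : ∀ u v w : V, edge v u → edge w u → v = w

namespace DirectedTree

variable {V : Type*}

/-- The roots: vertices with no incoming edge. -/
def isRoot (T : DirectedTree V) (v : V) : Prop := ¬ ∃ u : V, T.edge u v

/-- `V°`: the non-root vertices, i.e. vertices having a parent. -/
def nonRoot (T : DirectedTree V) (v : V) : Prop := ∃ u : V, T.edge u v

open Classical in
/-- The parent function (with junk value at roots). -/
def par (T : DirectedTree V) (v : V) : V := if h : ∃ u : V, T.edge u v then h.choose else v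

/-- The set of children of a vertex. -/
def chi (T : DirectedTree V) (u : V) : Set V := {v | T.edge u v}

/-- Iterated children `Chi^n(u)`. -/
def chiN (T : DirectedTree V) : ℕ → V → Set V
  | 0, u => {u}
  | n + 1, u => ⋃ w ∈ T.chiN n u, T.chi w

/-- The descendants of `u`. -/
def des (T : DirectedTree V) (u : V) : Set V := ⋃ n : ℕ, T.chiN n u

/-- `T` is leafless: every vertex has a child. -/
def Leafless (T : DirectedTree V) : Prop := ∀ u : V, ∃ v : V, T.edge u v

/-- The product `λ_{u∣v} = ∏_{j=0}^{n-1} λ_{par^j(v)}` of the weights along the path of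
length `n` ending at `v` (for `v ∈ Chi^n(u)` this is the usual `λ_{u∣v}`). -/
def pathProd (T : DirectedTree V) (lam : V → ℂ) (n : ℕ) (v : V) : ℂ :=
  ∏ j ∈ Finset.range n, lam (T.par^[j] v)

open Classical in
/-- The formal weighted-shift transformation `Λ_T` on families of complex numbers. -/
def lamMap (T : DirectedTree V) (lam : V → ℂ) (f : V → ℂ) : V → ℂ :=
  fun v => if T.nonRoot v then lam v * f (T.par v) else 0

variable (T : DirectedTree V)

theorem lamMap_add (lam : V → ℂ) (f g : V → ℂ) :
    T.lamMap lam (f + g) = T.lamMap lam f + T.lamMap lam g := by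
  funext v; simp only [lamMap, Pi.add_apply]; split <;> ring

theorem lamMap_smul (lam : V → ℂ) (c : ℂ) (f : V → ℂ) :
    T.lamMap lam (c • f) = c • T.lamMap lam f := by
  funext v; simp only [lamMap, Pi.smul_apply, smul_eq_mul]; split <;> ring

theorem lamMap_zero (lam : V → ℂ) : T.lamMap lam (0 : V → ℂ) = 0 := by
  funext v; simp [lamMap]

/-- The domain of the weighted shift `S_λ`. -/
def shiftDomain (lam : V → ℂ) : Submodule ℂ (lp (fun _ : V => ℂ) 2) where
  carrier := {f | Memℓp (T.lamMap lam f) 2}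
  zero_mem' := by
    rw [Set.mem_setOf_eq, lp.coeFn_zero, lamMap_zero]
    exact zero_memℓp
  add_mem' := by
    intro f g hf hg
    rw [Set.mem_setOf_eq, lp.coeFn_add, lamMap_add]
    exact hf.add hg
  smul_mem' := by
    intro c f hf
    rw [Set.mem_setOf_eq, lp.coeFn_smul, lamMap_smul]
    exact hf.const_smul c

/-- The weighted shift `S_λ` on the directed tree `T`, as a partial operator in `ℓ²(V)`. -/
def shift (lam : V → ℂ) : lp (fun _ : V => ℂ) 2 →ₗ.[ℂ] lp (fun _ : V => ℂ) 2 where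
  domain := T.shiftDomain lam
  toFun :=
    { toFun := fun f => (⟨T.lamMap lam f, f.2⟩ : lp (fun _ : V => ℂ) 2)
      map_add' := by
        rintro f g
        apply lp.ext
        rw [lp.coeFn_add]
        show T.lamMap lam
            ((((f : lp (fun _ : V => ℂ) 2) : V → ℂ)) + (((g : lp (fun _ : V => ℂ) 2) : V → ℂ)))
          = T.lamMap lam ((f : lp (fun _ : V => ℂ) 2) : V → ℂ)
            + T.lamMap lam ((g : lp (fun _ : V => ℂ) 2) : V → ℂ)
        exact T.lamMap_add lam _ _
      map_smul' := by
        rintro c f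
        apply lp.ext
        rw [lp.coeFn_smul]
        show T.lamMap lam (c • (((f : lp (fun _ : V => ℂ) 2) : V → ℂ)))
          = c • T.lamMap lam ((f : lp (fun _ : V => ℂ) 2) : V → ℂ)
        exact T.lamMap_smul lam c _ }

end DirectedTree

open Classical in
/-- The basis vector `e_u` of `ℓ²(V)`. -/
def eVec {V : Type*} (u : V) : lp (fun _ : V => ℂ) 2 := lp.single 2 u 1

section MoreDefs
universe u
variable {H : Type u} [NormedAddCommGroup H] [InnerProductSpace ℂ H]

/-- The inner product, linear in the FIRST argument (the paper's convention). -/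
def innerPaper (x y : H) : ℂ := inner ℂ y x

/-- The moment sequence `n ↦ ‖Sⁿ f‖²` generated by the vector `f`. -/
def momentSeq (S : H →ₗ.[ℂ] H) (f : H) : ℕ → ℝ := fun n => ‖powApp S n f‖ ^ 2

/-- `f` is a quasi-analytic vector of `S` : `f ∈ D^∞(S)` and
`∑ₙ ‖Sⁿ f‖^{-1/n} = ∞` (with `1/0 = ∞`). -/
def IsQuasiAnalyticVec (S : H →ₗ.[ℂ] H) (f : H) : Prop :=
  (∀ n : ℕ, f ∈ (pmapPow S n).domain) ∧
  ∑' n : ℕ, ((‖powApp S (n + 1) f‖₊ ^ ((1 : ℝ) / (n + 1)) : ℝ≥0) : ℝ≥0∞)⁻¹ = ∞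

end MoreDefs

/-- The consistency condition `μ_u(σ) = ∑_{v ∈ Chi(u)} |λ_v|² ∫_σ (1/s) dμ_v(s) + ε_u δ₀(σ)`
at the vertex `u` (with the convention `1/0 = ∞`). -/
def consistentAt {V : Type*} (T : DirectedTree V) (lam : V → ℂ) (μ : V → MeasureTheory.Measure ℝ≥0)
    (ε : V → ℝ≥0) (u : V) : Prop :=
  ∀ σ : Set ℝ≥0, MeasurableSet σ →
    μ u σ = (∑' v : {v : V // T.edge u v},
        (‖lam (v : V)‖₊ : ℝ≥0∞) ^ 2 * ∫⁻ s in σ, ((s : ℝ≥0∞))⁻¹ ∂(μ (v : V)))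
      + (ε u : ℝ≥0∞) * MeasureTheory.Measure.dirac (0 : ℝ≥0) σ

/-- The sequence `{ϑ, t₀, t₁, t₂, …}` obtained by prepending `ϑ` to `t`. -/
def shiftedSeq (ϑ : ℝ) (t : ℕ → ℝ) : ℕ → ℝ := fun n => match n with
  | 0 => ϑ
  | n + 1 => t n

/-- A positive definite sequence of real numbers. -/
def IsPosDefSeq (t : ℕ → ℝ) : Prop :=
  ∀ (n : ℕ) (α : ℕ → ℂ),
    0 ≤ (∑ k ∈ Finset.range (n + 1), ∑ l ∈ Finset.range (n + 1),
        (t (k + l) : ℂ) * α k * (starRingEnd ℂ) (α l)).re ∧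
    (∑ k ∈ Finset.range (n + 1), ∑ l ∈ Finset.range (n + 1),
        (t (k + l) : ℂ) * α k * (starRingEnd ℂ) (α l)).im = 0


/-! ### Auxiliary lemmas for stmt8 -/

namespace Stmt8Aux

open DirectedTree

variable {V : Type*} (T : DirectedTree V) (lam : V → ℂ)

open Classical in
/-- weight, junked to 0 at roots -/
def lamW (x : V) : ℂ := if T.nonRoot x then lam x else 0

def cfac (n : ℕ) (w : V) : ℂ := ∏ j ∈ Finset.range n, lamW T lam (T.par^[j] w)

lemma lamMap_apply' (f : V → ℂ) (w : V) :
    T.lamMap lam f w = lamW T lam w * f (T.par w) := by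
  classical
  rw [DirectedTree.lamMap, lamW]
  split <;> simp_all

lemma par_of_edge {u v : V} (h : T.edge u v) : T.par v = u := by
  have hnr : ∃ u', T.edge u' v := ⟨u, h⟩
  rw [DirectedTree.par, dif_pos hnr]
  exact T.parent_unique v _ u hnr.choose_spec h

lemma edge_of_par {v : V} (h : ∃ u', T.edge u' v) : T.edge (T.par v) v := by
  rw [DirectedTree.par, dif_pos h]
  exact h.choose_spec

lemma iter_lamMap (n : ℕ) (f : V → ℂ) (w : V) :
    (T.lamMap lam)^[n] f w = cfac T lam n w * f (T.par^[n] w) := by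
  induction n generalizing f w with
  | zero => simp [cfac]
  | succ n ih =>
    rw [Function.iterate_succ_apply', lamMap_apply', ih]
    rw [show (T.par^[n] (T.par w)) = T.par^[n+1] w from
      (Function.iterate_succ_apply T.par n w).symm]
    rw [cfac, cfac, Finset.prod_range_succ']
    simp only [Function.iterate_succ_apply, Function.iterate_zero_apply]
    ring

open Classical in
lemma eVec_apply (u w : V) : (eVec u : lp (fun _ : V => ℂ) 2) w = if w = u then 1 else 0 := by
  rw [eVec]
  by_cases h : w = u
  · subst h; simp [lp.single_apply_self]
  · rw [if_neg h]
    exact lp.single_apply_ne 2 u _ h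

open Classical in
lemma lamMap_eVec (u : V) :
    T.lamMap lam (eVec u : lp (fun _ : V => ℂ) 2) = fun x => if T.edge u x then lam x else 0 := by
  classical
  funext x
  rw [lamMap_apply', eVec_apply]
  by_cases h : T.edge u x
  · rw [if_pos h, if_pos (par_of_edge T h), lamW, if_pos ⟨u, h⟩, mul_one]
  · rw [if_neg h, lamW]
    by_cases hnr : T.nonRoot x
    · rw [if_pos hnr, if_neg, mul_zero]
      intro hpar
      exact h (hpar ▸ edge_of_par T hnr)
    · rw [if_neg hnr, zero_mul]

end Stmt8Aux

section PowAux
universe u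
variable {H : Type u} [NormedAddCommGroup H] [InnerProductSpace ℂ H]

lemma powApp_apply (S : H →ₗ.[ℂ] H) (n : ℕ) {x : H} (h : x ∈ (pmapPow S n).domain) :
    powApp S n x = (pmapPow S n) ⟨x, h⟩ := dif_pos h

lemma pmapComp_apply (g S : H →ₗ.[ℂ] H) {x : H} (h : x ∈ (pmapComp g S).domain)
    (hS : x ∈ S.domain) (h2 : S ⟨x, hS⟩ ∈ g.domain) :
    (pmapComp g S) ⟨x, h⟩ = g ⟨S ⟨x, hS⟩, h2⟩ := rfl

lemma mem_sdom_of_pow (S : H →ₗ.[ℂ] H) {x : H} (h : x ∈ (pmapPow S 1).domain) :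
    x ∈ S.domain := (Submodule.mem_inf.1 h).2

lemma shift_mem_pow_dom (S : H →ₗ.[ℂ] H) {x : H} (n : ℕ)
    (h : x ∈ (pmapPow S (n + 1)).domain) (hS : x ∈ S.domain) :
    S ⟨x, hS⟩ ∈ (pmapPow S n).domain := by
  obtain ⟨hx, hm⟩ := (Submodule.mem_inf.1 h).1
  exact hm

lemma powApp_zero' (S : H →ₗ.[ℂ] H) (x : H) : powApp S 0 x = x := by
  rw [powApp_apply S 0 (Submodule.mem_top)]
  rfl

lemma powApp_succ (S : H →ₗ.[ℂ] H) (n : ℕ) {x : H}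
    (h : x ∈ (pmapPow S (n + 1)).domain) (hS : x ∈ S.domain)
    (h2 : S ⟨x, hS⟩ ∈ (pmapPow S n).domain) :
    powApp S (n + 1) x = powApp S n (S ⟨x, hS⟩) := by
  rw [powApp_apply S (n+1) h, powApp_apply S n h2]
  exact pmapComp_apply (pmapPow S n) S h hS h2

end PowAux

namespace Stmt8Aux2
open DirectedTree Stmt8Aux
variable {V : Type*} (T : DirectedTree V) (lam : V → ℂ)

lemma shift_coe (f : (T.shift lam).domain) :
    ⇑((T.shift lam) f : lp (fun _ : V => ℂ) 2) = T.lamMap lam ⇑(f : lp (fun _ : V => ℂ) 2) := rfl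

lemma powApp_coe (f : lp (fun _ : V => ℂ) 2)
    (hf : ∀ n, f ∈ (pmapPow (T.shift lam) n).domain) (n : ℕ) :
    ⇑(powApp (T.shift lam) n f) = (T.lamMap lam)^[n] ⇑f := by
  induction n generalizing f hf with
  | zero => rw [powApp_zero', Function.iterate_zero_apply]
  | succ n ih =>
    set S := T.shift lam
    have hS : f ∈ S.domain := mem_sdom_of_pow S (hf 1)
    have h2 : ∀ m, S ⟨f, hS⟩ ∈ (pmapPow S m).domain :=
      fun m => shift_mem_pow_dom S m (hf (m+1)) hS
    rw [powApp_succ S n (hf (n+1)) hS (h2 n), ih _ h2, shift_coe,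
      Function.iterate_succ_apply]

end Stmt8Aux2

namespace Stmt8Aux3
open DirectedTree Stmt8Aux Stmt8Aux2
variable {V : Type*} (T : DirectedTree V) (lam : V → ℂ)

lemma nsq_eq_tsum (f : lp (fun _ : V => ℂ) 2) :
    ((‖f‖₊ : ℝ≥0∞)) ^ 2 = ∑' w : V, ((‖f w‖₊ : ℝ≥0∞)) ^ 2 := by
  have hp : (0:ℝ) < (2 : ℝ≥0∞).toReal := by norm_num
  have h := lp.hasSum_norm hp f
  have h2 : (2 : ℝ≥0∞).toReal = ((2:ℕ) : ℝ) := by norm_num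
  rw [h2] at h
  simp only [Real.rpow_natCast] at h
  have h' : HasSum (fun w : V => ‖f w‖₊ ^ 2) (‖f‖₊ ^ 2) := by
    rw [← NNReal.hasSum_coe]
    push_cast
    exact h
  have h3 := ENNReal.tsum_coe_eq h'
  push_cast at h3
  exact h3.symm

lemma key (hAll : ∀ (v : V) (m : ℕ),
      (eVec v : lp (fun _ : V => ℂ) 2) ∈ (pmapPow (T.shift lam) m).domain)
    (u : V) (n : ℕ) :
    ((‖powApp (T.shift lam) (n+1) (eVec u)‖₊ : ℝ≥0∞)) ^ 2
      = ∑' v : {v : V // T.edge u v},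
          ((‖lam (v:V)‖₊ : ℝ≥0∞)) ^ 2 *
            ((‖powApp (T.shift lam) n (eVec (v:V))‖₊ : ℝ≥0∞)) ^ 2 := by
  classical
  set S := T.shift lam with hSdef
  have hcoe : ∀ (v : V) (m : ℕ), ⇑(powApp S m (eVec v)) = (T.lamMap lam)^[m] ⇑(eVec v) :=
    fun v m => powApp_coe T lam _ (hAll v) m
  have hrhs : ∀ v : {v : V // T.edge u v},
      ((‖powApp S n (eVec (v:V))‖₊ : ℝ≥0∞)) ^ 2
        = ∑' w : V, ((‖cfac T lam n w‖₊ : ℝ≥0∞)) ^ 2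
            * (if T.par^[n] w = (v:V) then 1 else 0) := by
    intro v
    rw [nsq_eq_tsum]
    refine tsum_congr fun w => ?_
    rw [hcoe, iter_lamMap, eVec_apply]
    by_cases hpw : T.par^[n] w = (v:V) <;> simp [hpw]
  have L : ∀ w : V, ((‖((T.lamMap lam)^[n+1] ⇑(eVec u)) w‖₊ : ℝ≥0∞)) ^ 2
      = ∑' v : {v : V // T.edge u v}, ((‖lam (v:V)‖₊ : ℝ≥0∞)) ^ 2 *
          (((‖cfac T lam n w‖₊ : ℝ≥0∞)) ^ 2 * (if T.par^[n] w = (v:V) then 1 else 0)) := by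
    intro w
    rw [Function.iterate_succ_apply, lamMap_eVec, iter_lamMap]
    by_cases he : T.edge u (T.par^[n] w)
    · rw [tsum_eq_single (⟨T.par^[n] w, he⟩ : {v : V // T.edge u v})]
      · simp only [nnnorm_mul, ENNReal.coe_mul, mul_pow, if_pos he, if_pos rfl, mul_one]
        ring_nf
        simp [mul_comm]
      · intro v hv
        rw [if_neg, mul_zero, mul_zero]
        intro hc
        exact hv (Subtype.ext hc.symm)
    · have : ∀ v : {v : V // T.edge u v}, ((‖lam (v:V)‖₊ : ℝ≥0∞)) ^ 2 *
          (((‖cfac T lam n w‖₊ : ℝ≥0∞)) ^ 2 * (if T.par^[n] w = (v:V) then 1 else 0)) = 0 := by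
        intro v
        rw [if_neg, mul_zero, mul_zero]
        intro hc
        exact he (hc ▸ v.2)
      rw [tsum_congr this, tsum_zero, if_neg he, mul_zero]
      simp
  calc ((‖powApp S (n+1) (eVec u)‖₊ : ℝ≥0∞)) ^ 2
      = ∑' w : V, ((‖((T.lamMap lam)^[n+1] ⇑(eVec u)) w‖₊ : ℝ≥0∞)) ^ 2 := by
        rw [nsq_eq_tsum]
        exact tsum_congr fun w => by rw [hcoe]
    _ = ∑' w : V, ∑' v : {v : V // T.edge u v}, ((‖lam (v:V)‖₊ : ℝ≥0∞)) ^ 2 *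
          (((‖cfac T lam n w‖₊ : ℝ≥0∞)) ^ 2 * (if T.par^[n] w = (v:V) then 1 else 0)) :=
        tsum_congr L
    _ = ∑' v : {v : V // T.edge u v}, ∑' w : V, ((‖lam (v:V)‖₊ : ℝ≥0∞)) ^ 2 *
          (((‖cfac T lam n w‖₊ : ℝ≥0∞)) ^ 2 * (if T.par^[n] w = (v:V) then 1 else 0)) :=
        ENNReal.tsum_comm
    _ = _ := by
        refine tsum_congr fun v => ?_
        rw [ENNReal.tsum_mul_left, hrhs v]

end Stmt8Aux3

namespace Stmt8Aux4
open DirectedTree Stmt8Aux Stmt8Aux2 Stmt8Aux3 MeasureTheory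

lemma meas_pow (n : ℕ) : Measurable fun s : ℝ≥0 => ((s : ℝ≥0∞)) ^ n :=
  (measurable_coe_nnreal_ennreal).pow_const n

lemma meas_inv : Measurable fun s : ℝ≥0 => ((s : ℝ≥0∞))⁻¹ :=
  (measurable_coe_nnreal_ennreal).inv

lemma step (a : ℝ≥0∞) (ha : a ≠ ⊤) (μv : Measure ℝ≥0)
    (h : a * ∫⁻ s, ((s : ℝ≥0∞))⁻¹ ∂μv ≤ 1) (n : ℕ) :
    a * ∫⁻ s, ((s : ℝ≥0∞)) ^ (n + 1) ∂(μv.withDensity fun s => ((s : ℝ≥0∞))⁻¹)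
      = a * ∫⁻ s, ((s : ℝ≥0∞)) ^ n ∂μv := by
  rcases eq_or_ne a 0 with h0 | h0
  · rw [h0, zero_mul, zero_mul]
  · have hfin : ∫⁻ s, ((s : ℝ≥0∞))⁻¹ ∂μv ≠ ⊤ := by
      intro hinf
      rw [hinf, ENNReal.mul_top h0] at h
      exact absurd h (by simp)
    have hzero : μv {0} = 0 := by
      have hle : (⊤ : ℝ≥0∞) * μv {0} ≤ ∫⁻ s, ((s : ℝ≥0∞))⁻¹ ∂μv := by
        calc (⊤ : ℝ≥0∞) * μv {0} = ∫⁻ _ in {0}, ⊤ ∂μv := (setLIntegral_const _ _).symm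
          _ = ∫⁻ s in {0}, ((s : ℝ≥0∞))⁻¹ ∂μv := by
              refine (setLIntegral_congr_fun (measurableSet_singleton 0)
                (fun s hs => ?_)).symm
              rcases hs with rfl
              simp
          _ ≤ _ := setLIntegral_le_lintegral _ _
      by_contra hne
      rw [ENNReal.top_mul hne] at hle
      exact hfin (top_le_iff.mp hle)
    rw [lintegral_withDensity_eq_lintegral_mul μv meas_inv (meas_pow (n + 1))]
    congr 1
    refine lintegral_congr_ae ?_
    refine (measure_mono_null (fun s hs => ?_) hzero : _)
    by_contra hs0
    apply hs
    have hs' : s ≠ 0 := fun hc => hs0 (hc ▸ rfl)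
    show ((s : ℝ≥0∞))⁻¹ * ((s : ℝ≥0∞)) ^ (n + 1) = ((s : ℝ≥0∞)) ^ n
    rw [pow_succ', ← mul_assoc, ENNReal.inv_mul_cancel (by exact_mod_cast hs') ENNReal.coe_ne_top,
      one_mul]

lemma lint_pow_of_integrable (μv : Measure ℝ≥0) (n : ℕ) (c : ℝ)
    (hint : Integrable (fun s : ℝ≥0 => (s : ℝ) ^ n) μv)
    (hval : c = ∫ s, (s : ℝ) ^ n ∂μv) :
    ∫⁻ s, ((s : ℝ≥0∞)) ^ n ∂μv = ENNReal.ofReal c := by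
  rw [hval, ofReal_integral_eq_lintegral_ofReal hint (ae_of_all _ fun s => by positivity)]
  refine lintegral_congr fun s => ?_
  rw [ENNReal.ofReal_pow s.coe_nonneg, ENNReal.ofReal_coe_nnreal]

end Stmt8Aux4

/-- the consistency condition at `u` implies that `u` generates a Stieltjes
moment sequence, with the explicitly given representing measure. -/
theorem stmt8 {V : Type*} (T : DirectedTree V) (lam : V → ℂ)
    (hdom : (Submodule.span ℂ (Set.range (eVec (V := V))) : Set (lp (fun _ : V => ℂ) 2)) ⊆ Dinf (T.shift lam))
    (u : V) (hu : ∃ v : V, T.edge u v)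
    (μ : V → Measure ℝ≥0)
    (hrep : ∀ v : V, T.edge u v → IsRepMeasure (μ v) (momentSeq (T.shift lam) (eVec v)))
    (hcons : (∑' v : {v : V // T.edge u v},
        (‖lam (v : V)‖₊ : ℝ≥0∞) ^ 2 * ∫⁻ s, ((s : ℝ≥0∞))⁻¹ ∂(μ (v : V))) ≤ 1) :
    IsStieltjesMoment (momentSeq (T.shift lam) (eVec u))
    ∧ IsRepMeasure
      (Measure.sum (fun v : {v : V // T.edge u v} =>
          ((‖lam (v : V)‖₊ : ℝ≥0∞) ^ 2) • ((μ (v : V)).withDensity fun s => ((s : ℝ≥0∞))⁻¹))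
        + (1 - ∑' v : {v : V // T.edge u v},
            (‖lam (v : V)‖₊ : ℝ≥0∞) ^ 2 * ∫⁻ s, ((s : ℝ≥0∞))⁻¹ ∂(μ (v : V)))
          • Measure.dirac (0 : ℝ≥0))
      (momentSeq (T.shift lam) (eVec u)) := by
  classical
  set S := T.shift lam with hS
  have hAll : ∀ (v : V) (m : ℕ), (eVec v : lp (fun _ : V => ℂ) 2) ∈ (pmapPow S m).domain :=
    fun v m => hdom (Submodule.subset_span (Set.mem_range_self v)) m
  set A : ℝ≥0∞ := ∑' v : {v : V // T.edge u v},
      (‖lam (v : V)‖₊ : ℝ≥0∞) ^ 2 * ∫⁻ s, ((s : ℝ≥0∞))⁻¹ ∂(μ (v : V)) with hA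
  set μu : Measure ℝ≥0 := Measure.sum (fun v : {v : V // T.edge u v} =>
      ((‖lam (v : V)‖₊ : ℝ≥0∞) ^ 2) • ((μ (v : V)).withDensity fun s => ((s : ℝ≥0∞))⁻¹))
    + (1 - A) • Measure.dirac (0 : ℝ≥0) with hμu
  have hbound : ∀ v : {v : V // T.edge u v},
      (‖lam (v : V)‖₊ : ℝ≥0∞) ^ 2 * ∫⁻ s, ((s : ℝ≥0∞))⁻¹ ∂(μ (v : V)) ≤ 1 :=
    fun v => le_trans (ENNReal.le_tsum v) hcons
  have hanetop : ∀ v : {v : V // T.edge u v}, ((‖lam (v : V)‖₊ : ℝ≥0∞) ^ 2) ≠ ⊤ :=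
    fun v => ENNReal.pow_ne_top ENNReal.coe_ne_top
  have hlint : ∀ n : ℕ, ∫⁻ s, ((s : ℝ≥0∞)) ^ n ∂μu
      = ((‖powApp S n (eVec u)‖₊ : ℝ≥0∞)) ^ 2 := by
    intro n
    cases n with
    | zero =>
      simp only [pow_zero, lintegral_one]
      rw [hμu, Measure.add_apply, Measure.sum_apply _ MeasurableSet.univ]
      simp only [Measure.smul_apply, smul_eq_mul]
      rw [Measure.dirac_apply_of_mem (Set.mem_univ (0 : ℝ≥0))]
      have hwd : ∀ v : {v : V // T.edge u v},
          ((μ (v : V)).withDensity fun s => ((s : ℝ≥0∞))⁻¹) Set.univ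
            = ∫⁻ s, ((s : ℝ≥0∞))⁻¹ ∂(μ (v : V)) := fun v => by
        rw [withDensity_apply _ MeasurableSet.univ, setLIntegral_univ]
      rw [tsum_congr (fun v => by rw [hwd v]), mul_one, ← hA, add_tsub_cancel_of_le hcons]
      rw [powApp_zero']
      have hnorm : ‖(eVec u : lp (fun _ : V => ℂ) 2)‖ = 1 := by
        rw [eVec]
        have := lp.norm_single (E := fun _ : V => ℂ) (by norm_num : (0:ℝ≥0∞) < 2)
          u (1 : ℂ)
        simpa using this
      have h1 : ‖(eVec u : lp (fun _ : V => ℂ) 2)‖₊ = 1 := by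
        ext
        simpa using hnorm
      rw [h1]
      simp
    | succ n =>
      rw [hμu, lintegral_add_measure, lintegral_smul_measure, lintegral_sum_measure]
      have hd : ∫⁻ s, ((s : ℝ≥0∞)) ^ (n + 1) ∂(Measure.dirac (0 : ℝ≥0)) = 0 := by
        rw [lintegral_dirac' _ (Stmt8Aux4.meas_pow (n + 1))]
        simp
      rw [hd, smul_zero, add_zero]
      have hterm : ∀ v : {v : V // T.edge u v},
          ∫⁻ s, ((s : ℝ≥0∞)) ^ (n + 1)
              ∂(((‖lam (v : V)‖₊ : ℝ≥0∞) ^ 2) •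
                ((μ (v : V)).withDensity fun s => ((s : ℝ≥0∞))⁻¹))
            = ((‖lam (v : V)‖₊ : ℝ≥0∞)) ^ 2
                * ((‖powApp S n (eVec (v : V))‖₊ : ℝ≥0∞)) ^ 2 := by
        intro v
        rw [lintegral_smul_measure, smul_eq_mul, Stmt8Aux4.step _ (hanetop v) (μ (v : V)) (hbound v) n]
        congr 1
        rw [Stmt8Aux4.lint_pow_of_integrable (μ (v : V)) n _
          ((hrep _ v.2 n).1) ((hrep _ v.2 n).2)]
        show ENNReal.ofReal (momentSeq S (eVec (v : V)) n) = _
        rw [momentSeq]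
        rw [ENNReal.ofReal_pow (norm_nonneg _), ofReal_norm, enorm_eq_nnnorm]
      rw [tsum_congr hterm]
      exact (Stmt8Aux3.key T lam hAll u n).symm
  have hrepu : IsRepMeasure μu (momentSeq S (eVec u)) := by
    intro n
    have haesm : AEStronglyMeasurable (fun s : ℝ≥0 => (s : ℝ) ^ n) μu :=
      (NNReal.continuous_coe.pow n).aestronglyMeasurable
    have hofreal : ∫⁻ s, ENNReal.ofReal ((s : ℝ) ^ n) ∂μu
        = ((‖powApp S n (eVec u)‖₊ : ℝ≥0∞)) ^ 2 := by
      rw [← hlint n]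
      exact lintegral_congr fun s => by
        rw [ENNReal.ofReal_pow s.coe_nonneg, ENNReal.ofReal_coe_nnreal]
    constructor
    · refine ⟨haesm, ?_⟩
      have hnn : ∫⁻ s, (‖(s : ℝ) ^ n‖₊ : ℝ≥0∞) ∂μu
          = ∫⁻ s, ((s : ℝ≥0∞)) ^ n ∂μu := by
        refine lintegral_congr fun s => ?_
        have hns : ‖(s : ℝ)‖₊ = s := by ext; simp
        rw [nnnorm_pow, hns, ENNReal.coe_pow]
      show (∫⁻ s, (‖(s : ℝ) ^ n‖₊ : ℝ≥0∞) ∂μu) < ⊤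
      rw [hnn, hlint n]
      exact ENNReal.pow_lt_top ENNReal.coe_lt_top
    · show momentSeq S (eVec u) n = _
      rw [integral_eq_lintegral_of_nonneg_ae (ae_of_all _ fun s => by positivity) haesm,
        hofreal, momentSeq]
      rw [ENNReal.toReal_pow, ENNReal.coe_toReal, coe_nnnorm]
  exact ⟨⟨μu, hrepu⟩, hrepu⟩


end
end

section
/- Let T be a directed tree, {λ_v}_{v∈V°} a system of complex numbers, {ε_v}_{v∈V} a system of nonnegative reals, and {μ_v}_{v∈V} a system of Borel probability measures on [0,∞) satisfying, for every u ∈ V and Borel σ ⊆ [0,∞), μ_u(σ) = ∑_{v∈Chi(u)} |λ_v|² ∫_σ (1/s) dμ_v(s) + ε_u δ₀(σ). Then: (i) for every u ∈ V, ∑_{v∈Chi(u)} |λ_v|² ∫_{[0,∞)} (1/s) dμ_v(s) ≤ 1 and ε_u = 1 − ∑_{v∈Chi(u)} |λ_v|² ∫_{[0,∞)} (1/s) dμ_v(s); (ii) for every u ∈ V, μ_u({0}) = 0 if and only if ε_u = 0; (iii) for every v ∈ V°, if λ_v ≠ 0 then μ_v({0}) = 0; (iv) for every u ∈ V, every n ≥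 1 and every Borel σ ⊆ [0,∞), μ_u(σ) = ∑_{v∈Chi^n(u)} |λ_{u|v}|² ∫_σ (1/s^n) dμ_v(s) + ε_u δ₀(σ). -/
open MeasureTheory ENNReal
open scoped NNReal
noncomputable section

section Stmt12Aux

variable {V : Type*} (T : DirectedTree V) (lam : V → ℂ) (ε : V → ℝ≥0) (μ : V → Measure ℝ≥0)

private lemma par_eq_of_edge {v w : V} (hvw : T.edge v w) : T.par w = v := by
  simp only [DirectedTree.par]
  rw [dif_pos ⟨v, hvw⟩]
  exact T.parent_unique w _ v (Exists.choose_spec (⟨v, hvw⟩ : ∃ u, T.edge u w)) hvw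

private lemma pathProd_succ {v w : V} (hvw : T.edge v w) (n : ℕ) :
    T.pathProd lam (n + 1) w = T.pathProd lam n v * lam w := by
  simp only [DirectedTree.pathProd]
  rw [Finset.prod_range_succ']
  simp only [Function.iterate_succ_apply, Function.iterate_zero_apply,
    par_eq_of_edge T hvw, DirectedTree.pathProd]

private lemma nonRoot_of_mem_chiN {u v : V} {n : ℕ} (hn : 1 ≤ n) (hv : v ∈ T.chiN n u) :
    T.nonRoot v := by
  obtain ⟨m, rfl⟩ := Nat.exists_eq_add_of_le hn
  rw [show 1 + m = m + 1 by ring] at hv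
  simp only [DirectedTree.chiN] at hv
  obtain ⟨w, _, hw⟩ := Set.mem_iUnion₂.mp hv
  exact ⟨w, hw⟩

private lemma measEq (hcons : ∀ u : V, consistentAt T lam μ ε u) (u : V) :
    μ u = (Measure.sum fun v : {v : V // T.edge u v} =>
        ((‖lam (v : V)‖₊ : ℝ≥0∞) ^ 2) • ((μ (v : V)).withDensity fun s => ((s : ℝ≥0∞))⁻¹))
      + (ε u : ℝ≥0∞) • Measure.dirac (0 : ℝ≥0) := by
  ext σ hσ
  rw [hcons u σ hσ, Measure.add_apply, Measure.sum_apply _ hσ]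
  simp only [Measure.smul_apply, smul_eq_mul, withDensity_apply _ hσ]

private lemma lintB (hcons : ∀ u : V, consistentAt T lam μ ε u) (u : V)
    {f : ℝ≥0 → ℝ≥0∞} (hf : Measurable f) {σ : Set ℝ≥0} (hσ : MeasurableSet σ) :
    ∫⁻ s in σ, f s ∂(μ u)
      = (∑' v : {v : V // T.edge u v},
          (‖lam (v : V)‖₊ : ℝ≥0∞) ^ 2 * ∫⁻ s in σ, ((s : ℝ≥0∞))⁻¹ * f s ∂(μ (v : V)))
        + (ε u : ℝ≥0∞) * (f 0 * Measure.dirac (0 : ℝ≥0) σ) := by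
  conv_lhs => rw [measEq T lam ε μ hcons u]
  rw [Measure.restrict_add, lintegral_add_measure, Measure.restrict_sum _ hσ,
    lintegral_sum_measure]
  congr 1
  · refine tsum_congr fun v => ?_
    rw [Measure.restrict_smul, lintegral_smul_measure,
      setLIntegral_withDensity_eq_setLIntegral_mul _
        (f := fun s : ℝ≥0 => ((s : ℝ≥0∞))⁻¹) measurable_coe_nnreal_ennreal.inv hf hσ]
    rfl
  · classical
    rw [Measure.restrict_smul, lintegral_smul_measure, setLIntegral_dirac' hf hσ]
    by_cases h0 : (0 : ℝ≥0) ∈ σ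
    · rw [if_pos h0, Measure.dirac_apply' _ hσ, Set.indicator_of_mem h0, Pi.one_apply, mul_one, smul_eq_mul]
    · rw [if_neg h0, Measure.dirac_apply' _ hσ, Set.indicator_of_notMem h0]
      simp

private lemma child_zero (hprob : ∀ v : V, IsProbabilityMeasure (μ v))
    (hcons : ∀ u : V, consistentAt T lam μ ε u) {u v : V} (huv : T.edge u v)
    (hlam : lam v ≠ 0) : μ v {0} = 0 := by
  by_contra hm
  have h := hcons u {0} (measurableSet_singleton 0)
  have hterm : (‖lam v‖₊ : ℝ≥0∞) ^ 2 * ∫⁻ s in {0}, ((s : ℝ≥0∞))⁻¹ ∂(μ v) = ∞ := by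
    rw [Measure.restrict_singleton, lintegral_smul_measure, lintegral_dirac]
    rw [ENNReal.coe_zero, ENNReal.inv_zero, smul_eq_mul, ENNReal.mul_top hm,
      ENNReal.mul_top (pow_ne_zero _ (by simpa using hlam))]
  have hle : (∞ : ℝ≥0∞) ≤ μ u {0} := by
    rw [h]
    exact le_trans (hterm ▸ ENNReal.le_tsum (⟨v, huv⟩ : {v' : V // T.edge u v'})) le_self_add
  have := hprob u
  exact absurd (hle.trans prob_le_one) (by simp)

private lemma mu_zero (hprob : ∀ v : V, IsProbabilityMeasure (μ v))
    (hcons : ∀ u : V, consistentAt T lam μ ε u) (u : V) :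
    μ u {0} = (ε u : ℝ≥0∞) := by
  have h := hcons u {0} (measurableSet_singleton 0)
  have hS : (∑' v : {v : V // T.edge u v},
      (‖lam (v : V)‖₊ : ℝ≥0∞) ^ 2 * ∫⁻ s in {0}, ((s : ℝ≥0∞))⁻¹ ∂(μ (v : V))) = 0 := by
    refine ENNReal.tsum_eq_zero.mpr fun v => ?_
    by_cases hlam : lam (v : V) = 0
    · simp [hlam]
    · have h0 := child_zero T lam ε μ hprob hcons v.2 hlam
      rw [Measure.restrict_singleton, h0, zero_smul, lintegral_zero_measure, mul_zero]
  rw [h, hS, zero_add, Measure.dirac_apply_of_mem (Set.mem_singleton 0), mul_one]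

private lemma reindex (n : ℕ) (u : V) (F : V → ℝ≥0∞) :
    (∑' v : (T.chiN n u), ∑' w : {w : V // T.edge (v : V) w},
        (‖lam (w : V)‖₊ : ℝ≥0∞) ^ 2 * ((‖T.pathProd lam n (v : V)‖₊ : ℝ≥0∞) ^ 2 * F (w : V)))
      = ∑' w : (T.chiN (n + 1) u),
          (‖T.pathProd lam (n + 1) (w : V)‖₊ : ℝ≥0∞) ^ 2 * F (w : V) := by
  have hL : ∀ v : (T.chiN n u), (∑' w : {w : V // T.edge (v : V) w},
      (‖lam (w : V)‖₊ : ℝ≥0∞) ^ 2 * ((‖T.pathProd lam n (v : V)‖₊ : ℝ≥0∞) ^ 2 * F (w : V)))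
      = ∑' w : V, Set.indicator {w : V | T.edge (v : V) w}
          (fun w => (‖lam w‖₊ : ℝ≥0∞) ^ 2
            * ((‖T.pathProd lam n (v : V)‖₊ : ℝ≥0∞) ^ 2 * F w)) w :=
    fun v => by
      exact tsum_subtype {w : V | T.edge (v : V) w}
        (fun w => (‖lam w‖₊ : ℝ≥0∞) ^ 2 * ((‖T.pathProd lam n (v : V)‖₊ : ℝ≥0∞) ^ 2 * F w))
  rw [tsum_congr hL, ENNReal.tsum_comm,
    tsum_subtype (T.chiN (n + 1) u)
      (fun w => (‖T.pathProd lam (n + 1) w‖₊ : ℝ≥0∞) ^ 2 * F w)]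
  refine tsum_congr fun w => ?_
  by_cases hw : w ∈ T.chiN (n + 1) u
  · obtain ⟨v₀, hv₀, hv₀w⟩ := Set.mem_iUnion₂.mp
      (by simp only [DirectedTree.chiN] at hw; exact hw)
    rw [Set.indicator_of_mem hw]
    rw [tsum_eq_single (⟨v₀, hv₀⟩ : (T.chiN n u)) ?side]
    · rw [Set.indicator_of_mem (show w ∈ {w' : V | T.edge v₀ w'} from hv₀w),
        pathProd_succ T lam hv₀w, nnnorm_mul, ENNReal.coe_mul, mul_pow]
      ring
    case side =>
      rintro ⟨v, hv⟩ hne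
      by_cases hvw : T.edge v w
      · exact absurd (Subtype.ext (T.parent_unique w v v₀ hvw hv₀w)) hne
      · exact Set.indicator_of_notMem hvw _
  · rw [Set.indicator_of_notMem hw]
    refine ENNReal.tsum_eq_zero.mpr fun v => ?_
    refine Set.indicator_of_notMem (fun hvw => hw ?_) _
    simp only [DirectedTree.chiN]
    exact Set.mem_iUnion₂.mpr ⟨(v : V), v.2, hvw⟩

private lemma keyIV (hprob : ∀ v : V, IsProbabilityMeasure (μ v))
    (hcons : ∀ u : V, consistentAt T lam μ ε u) (u : V) (n : ℕ) (hn : 1 ≤ n)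
    (σ : Set ℝ≥0) (hσ : MeasurableSet σ) :
    μ u σ = (∑' v : (T.chiN n u),
        (‖T.pathProd lam n (v : V)‖₊ : ℝ≥0∞) ^ 2
          * ∫⁻ s in σ, (((s : ℝ≥0∞)) ^ n)⁻¹ ∂(μ (v : V)))
      + (ε u : ℝ≥0∞) * Measure.dirac (0 : ℝ≥0) σ := by
  have hfm : ∀ n : ℕ, Measurable fun s : ℝ≥0 => (((s : ℝ≥0∞)) ^ n)⁻¹ :=
    fun n => ((measurable_coe_nnreal_ennreal.pow_const n).inv)
  induction n, hn using Nat.le_induction with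
  | base =>
    rw [hcons u σ hσ]
    congr 1
    have hre := reindex T lam 0 u (fun w => ∫⁻ s in σ, (((s : ℝ≥0∞)) ^ 1)⁻¹ ∂(μ w))
    rw [zero_add] at hre
    rw [← hre]
    have hmem : u ∈ T.chiN 0 u := by
      simp only [DirectedTree.chiN]
      exact Set.mem_singleton u
    rw [tsum_eq_single (⟨u, hmem⟩ : (T.chiN 0 u)) ?side]
    · refine tsum_congr fun v => ?_
      simp only [DirectedTree.pathProd, Finset.range_zero, Finset.prod_empty, nnnorm_one,
        ENNReal.coe_one, one_pow, one_mul, pow_one]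
    case side =>
      rintro ⟨v, hv⟩ hne
      exfalso
      apply hne
      have hv' : v = u := by
        simp only [DirectedTree.chiN, Set.mem_singleton_iff] at hv
        exact hv
      exact Subtype.ext hv'
  | succ n hn IH =>
    rw [IH]
    congr 1
    rw [← reindex T lam n u (fun w => ∫⁻ s in σ, (((s : ℝ≥0∞)) ^ (n + 1))⁻¹ ∂(μ w))]
    refine tsum_congr fun v => ?_
    rw [lintB T lam ε μ hcons (v : V) (hfm n) hσ]
    have hεv : (‖T.pathProd lam n (v : V)‖₊ : ℝ≥0∞) ^ 2
        * ((ε (v : V) : ℝ≥0∞) * ((((0 : ℝ≥0) : ℝ≥0∞) ^ n)⁻¹ * Measure.dirac (0 : ℝ≥0) σ))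
        = 0 := by
      by_cases hp : T.pathProd lam n (v : V) = 0
      · simp [hp]
      · have hlamv : lam (v : V) ≠ 0 := by
          have := Finset.prod_ne_zero_iff.mp hp 0 (Finset.mem_range.mpr hn)
          simpa using this
        obtain ⟨w, hw⟩ := nonRoot_of_mem_chiN T hn v.2
        have h0 := child_zero T lam ε μ hprob hcons hw hlamv
        have hε0 : (ε (v : V) : ℝ≥0∞) = 0 := by
          rw [← mu_zero T lam ε μ hprob hcons (v : V), h0]
        rw [hε0, zero_mul, mul_zero]
    rw [mul_add, hεv, add_zero, ← ENNReal.tsum_mul_left]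
    refine tsum_congr fun w => ?_
    have hJ : (∫⁻ s in σ, ((s : ℝ≥0∞))⁻¹ * (((s : ℝ≥0∞)) ^ n)⁻¹ ∂(μ (w : V)))
        = ∫⁻ s in σ, (((s : ℝ≥0∞)) ^ (n + 1))⁻¹ ∂(μ (w : V)) := by
      refine lintegral_congr fun s => ?_
      rw [pow_succ', ENNReal.mul_inv (Or.inr (ENNReal.pow_ne_top ENNReal.coe_ne_top))
        (Or.inl ENNReal.coe_ne_top)]
    rw [hJ]
    ring

end Stmt12Aux

/-- elementary properties of a consistent system of probability measures
on a directed tree. -/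
theorem stmt12 {V : Type*} (T : DirectedTree V) (lam : V → ℂ)
    (ε : V → ℝ≥0) (μ : V → Measure ℝ≥0)
    (hprob : ∀ v : V, IsProbabilityMeasure (μ v))
    (hcons : ∀ u : V, consistentAt T lam μ ε u) :
    (∀ u : V,
      (∑' v : {v : V // T.edge u v},
          (‖lam (v : V)‖₊ : ℝ≥0∞) ^ 2 * ∫⁻ s, ((s : ℝ≥0∞))⁻¹ ∂(μ (v : V))) ≤ 1
      ∧ (ε u : ℝ≥0∞) = 1 - ∑' v : {v : V // T.edge u v},
          (‖lam (v : V)‖₊ : ℝ≥0∞) ^ 2 * ∫⁻ s, ((s : ℝ≥0∞))⁻¹ ∂(μ (v : V)))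
    ∧ (∀ u : V, μ u {0} = 0 ↔ ε u = 0)
    ∧ (∀ v : V, T.nonRoot v → lam v ≠ 0 → μ v {0} = 0)
    ∧ (∀ (u : V) (n : ℕ), 1 ≤ n → ∀ σ : Set ℝ≥0, MeasurableSet σ →
        μ u σ = (∑' v : (T.chiN n u),
            (‖T.pathProd lam n (v : V)‖₊ : ℝ≥0∞) ^ 2
              * ∫⁻ s in σ, (((s : ℝ≥0∞)) ^ n)⁻¹ ∂(μ (v : V)))
          + (ε u : ℝ≥0∞) * Measure.dirac (0 : ℝ≥0) σ) := by
  refine ⟨fun u => ?_, fun u => ?_, fun v hv hlam => ?_,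
    keyIV T lam ε μ hprob hcons⟩
  · have hp := hprob u
    have h := hcons u Set.univ MeasurableSet.univ
    rw [measure_univ, measure_univ, mul_one] at h
    simp only [Measure.restrict_univ] at h
    have h' : (∑' v : {v : V // T.edge u v},
        (‖lam (v : V)‖₊ : ℝ≥0∞) ^ 2 * ∫⁻ s, ((s : ℝ≥0∞))⁻¹ ∂(μ (v : V)))
        + (ε u : ℝ≥0∞) = 1 := h.symm
    have hle : (∑' v : {v : V // T.edge u v},
        (‖lam (v : V)‖₊ : ℝ≥0∞) ^ 2 * ∫⁻ s, ((s : ℝ≥0∞))⁻¹ ∂(μ (v : V))) ≤ 1 :=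
      le_self_add.trans h'.le
    exact ⟨hle, ENNReal.eq_sub_of_add_eq (hle.trans_lt ENNReal.one_lt_top).ne
      (by rw [add_comm]; exact h')⟩
  · rw [mu_zero T lam ε μ hprob hcons u]
    exact ENNReal.coe_eq_zero
  · obtain ⟨w, hw⟩ := hv
    exact child_zero T lam ε μ hprob hcons hw hlam


end
end
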